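/- Let F be the Pareto cdf F(x) = 1 − 1/x for x ≥ 1 (and F(x) = 0 for x < 1), and let G be the Pareto cdf G(y) = 1 − 2/y for y ≥ 2 (and G(y) = 0 for y < 2). Then F ≤_st G, and for a DL-coupled pair (X,Y) with joint distribution D_*^{F,G}, the distribution of the sum satisfies P(X + Y ≤ c) = (c + √(c² − 4c) − 4) / (2c) for every c ∈ [4, ∞); in particular ess-inf(X+Y) = 4. -/

import Mathlib

open MeasureTheory Set Filter

noncomputable section

variable {Ω : Type*} [MeasurableSpace Ω]

/-- A cumulative distribution function on `ℝ`. -/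
structure IsCDF (F : ℝ → ℝ) : Prop where
  mono : Monotone F
  right_cont : ∀ x, ContinuousWithinAt F (Set.Ici x) x
  tendsto_atBot : Filter.Tendsto F Filter.atBot (nhds 0)
  tendsto_atTop : Filter.Tendsto F Filter.atTop (nhds 1)

/-- The probability space is atomless. -/
def Atomless (μ : Measure Ω) : Prop :=
  ∀ s : Set Ω, MeasurableSet s → 0 < μ s →
    ∃ t : Set Ω, MeasurableSet t ∧ t ⊆ s ∧ 0 < μ t ∧ μ t < μ s

/-- The distribution function of a random variable. -/
def distFun (μ : Measure Ω) (X : Ω → ℝ) : ℝ → ℝ :=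
  fun x => (μ {ω | X ω ≤ x}).toReal

/-- `X` is a random variable distributed according to `F`. -/
def HasCDF (μ : Measure Ω) (X : Ω → ℝ) (F : ℝ → ℝ) : Prop :=
  Measurable X ∧ ∀ x, distFun μ X x = F x

/-- Stochastic order `F ≤_st G`, i.e. `G(x) ≤ F(x)` for all `x`. -/
def StOrder (F G : ℝ → ℝ) : Prop := ∀ x, G x ≤ F x

/-- The ordered-coupling set `F^o_2(F,G)`: `X ~ F`, `Y ~ G`, `X ≤ Y` a.s. -/
def OrderedCoupling (μ : Measure Ω) (F G : ℝ → ℝ) (X Y : Ω → ℝ) : Prop :=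
  HasCDF μ X F ∧ HasCDF μ Y G ∧ ∀ᵐ ω ∂μ, X ω ≤ Y ω

/-- The directional lower (DL) coupling distribution function `D_*^{F,G}`. -/
def DLdf (F G : ℝ → ℝ) (x y : ℝ) : ℝ :=
  if y ≤ x then G y else F x - sInf ((fun z => F z - G z) '' Set.Icc x y)

/-- `(X,Y)` is DL-coupled: its joint distribution function is `D_*^{F,G}`. -/
def IsDLCoupled (μ : Measure Ω) (F G : ℝ → ℝ) (X Y : Ω → ℝ) : Prop :=
  ∀ x y : ℝ, (μ {ω | X ω ≤ x ∧ Y ω ≤ y}).toReal = DLdf F G x y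

/-- The Pareto cdf `F(x) = 1 − 1/x` for `x ≥ 1`, `0` otherwise. -/
def paretoF : ℝ → ℝ := fun x => if 1 ≤ x then 1 - 1 / x else 0

/-- The Pareto cdf `G(y) = 1 − 2/y` for `y ≥ 2`, `0` otherwise. -/
def paretoG : ℝ → ℝ := fun y => if 2 ≤ y then 1 - 2 / y else 0

/-! ### Auxiliary lemmas about the Pareto cdfs -/

lemma paretoF_of_le {x : ℝ} (h : 1 ≤ x) : paretoF x = 1 - 1/x := if_pos h
lemma paretoF_of_lt {x : ℝ} (h : x < 1) : paretoF x = 0 := if_neg (not_le.2 h)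
lemma paretoG_of_le {y : ℝ} (h : 2 ≤ y) : paretoG y = 1 - 2/y := if_pos h
lemma paretoG_of_le_two {y : ℝ} (h : y ≤ 2) : paretoG y = 0 := by
  rcases lt_or_eq_of_le h with h' | h'
  · exact if_neg (not_le.2 h')
  · subst h'; rw [paretoG_of_le le_rfl]; norm_num

lemma paretoF_nonneg (x : ℝ) : 0 ≤ paretoF x := by
  unfold paretoF; split
  · rename_i h
    have hx : (0:ℝ) < x := by linarith
    have : 1/x ≤ 1 := by rw [div_le_one hx]; linarith
    linarith
  · exact le_rfl

lemma paretoF_mono : Monotone paretoF := by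
  intro u v huv
  by_cases hu : 1 ≤ u
  · rw [paretoF_of_le hu, paretoF_of_le (hu.trans huv)]
    have : 1/v ≤ 1/u := one_div_le_one_div_of_le (by linarith) huv
    linarith
  · rw [paretoF_of_lt (not_le.1 hu)]
    exact paretoF_nonneg v

lemma delta_of_le_two {z : ℝ} (h : z ≤ 2) : paretoF z - paretoG z = paretoF z := by
  rw [paretoG_of_le_two h]; ring

lemma delta_of_ge_two {z : ℝ} (h : 2 ≤ z) : paretoF z - paretoG z = 1/z := by
  rw [paretoF_of_le (by linarith), paretoG_of_le h]
  have hz : z ≠ 0 := by positivity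
  field_simp; ring

lemma delta_nonneg (z : ℝ) : 0 ≤ paretoF z - paretoG z := by
  rcases le_total z 2 with h | h
  · rw [delta_of_le_two h]; exact paretoF_nonneg z
  · rw [delta_of_ge_two h]; positivity

lemma delta_mono {u v : ℝ} (huv : u ≤ v) (hv : v ≤ 2) :
    paretoF u - paretoG u ≤ paretoF v - paretoG v := by
  rw [delta_of_le_two (huv.trans hv), delta_of_le_two hv]
  exact paretoF_mono huv

lemma delta_anti {u v : ℝ} (hu : 2 ≤ u) (huv : u ≤ v) :
    paretoF v - paretoG v ≤ paretoF u - paretoG u := by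
  rw [delta_of_ge_two hu, delta_of_ge_two (hu.trans huv)]
  exact one_div_le_one_div_of_le (by linarith) huv

lemma sInf_delta {x y : ℝ} (h : x ≤ y) :
    sInf ((fun z => paretoF z - paretoG z) '' Set.Icc x y)
      = min (paretoF x - paretoG x) (paretoF y - paretoG y) := by
  have hB : BddBelow ((fun z => paretoF z - paretoG z) '' Set.Icc x y) := by
    refine ⟨0, ?_⟩
    rintro b ⟨z, _, rfl⟩
    exact delta_nonneg z
  apply le_antisymm
  · rcases min_cases (paretoF x - paretoG x) (paretoF y - paretoG y) with ⟨hm, _⟩ | ⟨hm, _⟩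
    · rw [hm]; exact csInf_le hB ⟨x, ⟨le_rfl, h⟩, rfl⟩
    · rw [hm]; exact csInf_le hB ⟨y, ⟨h, le_rfl⟩, rfl⟩
  · refine le_csInf ⟨_, ⟨x, ⟨le_rfl, h⟩, rfl⟩⟩ ?_
    rintro b ⟨z, ⟨hz1, hz2⟩, rfl⟩
    rcases le_total z 2 with hz | hz
    · exact le_trans (min_le_left _ _) (delta_mono hz1 hz)
    · exact le_trans (min_le_right _ _) (delta_anti hz hz2)

lemma DLdf_of_le {x y : ℝ} (h : y ≤ x) : DLdf paretoF paretoG x y = paretoG y := if_pos h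

lemma DLdf_of_lt {x y : ℝ} (h : x < y) :
    DLdf paretoF paretoG x y
      = paretoF x - min (paretoF x - paretoG x) (paretoF y - paretoG y) := by
  rw [DLdf, if_neg (not_le.2 h), sInf_delta h.le]

lemma aux_one_div {x y : ℝ} (hx : 0 < x) (hy : 0 < y) (h : x * y ≤ x + y) :
    1 - 1/x ≤ 1/y := by
  rw [sub_le_iff_le_add]
  have he : 1/y + 1/x = (x + y)/(x*y) := by
    rw [eq_div_iff (by positivity : (x*y) ≠ 0), add_mul]
    field_simp
  rw [he, le_div_iff₀ (mul_pos hx hy), one_mul]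
  exact h

lemma aux_one_div' {x y : ℝ} (hx : 0 < x) (hy : 0 < y) (h : x + y ≤ x * y) :
    1/y ≤ 1 - 1/x := by
  rw [← sub_nonneg]
  have he : 1 - 1/x - 1/y = (x*y - (x + y))/(x*y) := by field_simp; ring
  rw [he]
  apply div_nonneg (by linarith) (by positivity)

lemma DLdf_zero {x y : ℝ} (hx1 : 1 < x) (hx2 : x < 2) (hy : 1 < y)
    (hxy : x * y ≤ x + y) : DLdf paretoF paretoG x y = 0 := by
  rcases le_or_gt y x with h | h
  · rw [DLdf_of_le h, paretoG_of_le_two (by linarith)]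
  · rw [DLdf_of_lt h]
    have hdx : paretoF x - paretoG x = 1 - 1/x := by
      rw [delta_of_le_two hx2.le, paretoF_of_le hx1.le]
    have hmin : min (paretoF x - paretoG x) (paretoF y - paretoG y)
        = paretoF x - paretoG x := by
      apply min_eq_left
      rcases le_total 2 y with h2 | h2
      · rw [hdx, delta_of_ge_two h2]
        exact aux_one_div (by linarith) (by linarith) hxy
      · exact delta_mono h.le h2
    rw [hmin, paretoG_of_le_two hx2.le]; ring

lemma DLdf_two {x y : ℝ} (hx : 2 ≤ x) (hxy : x ≤ y) :
    DLdf paretoF paretoG x y = 1 - 1/x - 1/y := by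
  rcases eq_or_lt_of_le hxy with h | h
  · subst h
    rw [DLdf_of_le le_rfl, paretoG_of_le hx]
    have : x ≠ 0 := by positivity
    field_simp; ring
  · rw [DLdf_of_lt h, delta_of_ge_two hx, delta_of_ge_two (hx.trans hxy),
      paretoF_of_le (by linarith)]
    rw [min_eq_right (one_div_le_one_div_of_le (by linarith) hxy)]

lemma DLdf_cross {x y : ℝ} (hx1 : 1 < x) (hx2 : x < 2) (hy : 2 ≤ y)
    (hxy : x + y ≤ x * y) : DLdf paretoF paretoG x y = 1 - 1/x - 1/y := by
  have h : x < y := by linarith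
  rw [DLdf_of_lt h, delta_of_le_two hx2.le, delta_of_ge_two hy, paretoF_of_le hx1.le,
    min_eq_right (aux_one_div' (by linarith) (by linarith) hxy)]

/-! ### Probability helper lemmas -/

lemma pr_zero (μ : Measure Ω) [IsProbabilityMeasure μ] {s : Set Ω}
    (h : (μ s).toReal = 0) : μ s = 0 := by
  rcases ENNReal.toReal_eq_zero_iff (μ s) |>.1 h with h' | h'
  · exact h'
  · exact absurd h' (measure_ne_top μ s)

lemma pr_mono (μ : Measure Ω) [IsProbabilityMeasure μ] {s t : Set Ω}
    (h : s ⊆ t) : (μ s).toReal ≤ (μ t).toReal :=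
  ENNReal.toReal_mono (measure_ne_top μ t) (measure_mono h)

lemma pr_diff (μ : Measure Ω) [IsProbabilityMeasure μ] {s t : Set Ω}
    (h : s ⊆ t) (hs : MeasurableSet s) :
    (μ (t \ s)).toReal = (μ t).toReal - (μ s).toReal := by
  rw [measure_diff h hs.nullMeasurableSet (measure_ne_top μ s),
    ENNReal.toReal_sub_of_le (measure_mono h) (measure_ne_top μ t)]

lemma pr_null_diff (μ : Measure Ω) [IsProbabilityMeasure μ] {s t : Set Ω}
    (h : s ⊆ t) (hs : MeasurableSet s)
    (heq : (μ s).toReal = (μ t).toReal) : μ (t \ s) = 0 := by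
  apply pr_zero μ
  rw [pr_diff μ h hs, heq, sub_self]

lemma pr_inter_of_diff_null (μ : Measure Ω) {s u : Set Ω}
    (h : μ (s \ u) = 0) : μ (s ∩ u) = μ s := by
  apply le_antisymm (measure_mono inter_subset_left)
  calc μ s ≤ μ (s ∩ u) + μ (s \ u) := measure_le_inter_add_diff μ s u
  _ = μ (s ∩ u) := by rw [h, add_zero]

lemma pr_union (μ : Measure Ω) [IsProbabilityMeasure μ] {s t : Set Ω}
    (hd : Disjoint s t) (ht : MeasurableSet t) :
    (μ (s ∪ t)).toReal = (μ s).toReal + (μ t).toReal := by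
  rw [measure_union hd ht, ENNReal.toReal_add (measure_ne_top μ s) (measure_ne_top μ t)]

lemma meas_lt_pareto (μ : Measure Ω) [IsProbabilityMeasure μ] (X : Ω → ℝ)
    {a : ℝ} (ha : 1 ≤ a) {H : ℝ → ℝ} (hH : ∀ x, H x = if a ≤ x then 1 - a / x else 0)
    (hX : ∀ x, (μ {ω | X ω ≤ x}).toReal = H x) (t : ℝ) :
    (μ {ω | X ω < t}).toReal = H t := by
  apply le_antisymm
  · calc (μ {ω | X ω < t}).toReal ≤ (μ {ω | X ω ≤ t}).toReal :=
      pr_mono μ (fun ω (h : X ω < t) => h.le)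
    _ = H t := hX t
  · rcases le_or_gt t a with hta | hta
    · have : H t ≤ 0 := by
        rw [hH t]
        split
        · rename_i h
          have hta' : t = a := le_antisymm hta h
          rw [hta', div_self (by linarith : a ≠ 0)]
          norm_num
        · exact le_rfl
      exact this.trans ENNReal.toReal_nonneg
    · apply le_of_forall_pos_le_add
      intro ε hε
      set s : ℝ := max a (t - ε) with hs
      have hst : s < t := max_lt (by linarith) (by linarith)
      have has : a ≤ s := le_max_left _ _
      have hts : t - s ≤ ε := by
        have : t - ε ≤ s := le_max_right _ _
        linarith
      have h1 : H t - H s ≤ ε := by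
        rw [hH t, hH s, if_pos hta.le, if_pos has]
        have hs0 : (0:ℝ) < s := by linarith
        have ht0 : (0:ℝ) < t := by linarith
        have key : a/s - a/t = a*(t-s)/(s*t) := by
          field_simp
        have key2 : a*(t-s)/(s*t) ≤ t - s := by
          rw [div_le_iff₀ (by positivity)]
          have h1t : 1 ≤ t := by linarith
          have hast : a ≤ s * t := by nlinarith
          nlinarith [mul_le_mul_of_nonneg_left hast (show 0 ≤ t - s by linarith)]
        linarith [key, key2]
      calc H t ≤ H s + ε := by linarith
      _ ≤ (μ {ω | X ω < t}).toReal + ε := by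
          have := hX s
          have hsub : {ω | X ω ≤ s} ⊆ {ω | X ω < t} :=
            fun ω (h : X ω ≤ s) => lt_of_le_of_lt h hst
          linarith [pr_mono μ hsub]

/-- For the two Pareto distributions, `F ≤_st G`, and for a DL-coupled pair
`(X,Y)` the sum satisfies `P(X+Y ≤ c) = (c + √(c² − 4c) − 4)/(2c)` for
`c ≥ 4`; in particular `ess-inf(X+Y) = 4`. -/
theorem pareto_DL_sum
    (μ : Measure Ω) [IsProbabilityMeasure μ]
    (X Y : Ω → ℝ) (hXY : OrderedCoupling μ paretoF paretoG X Y)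
    (hDL : IsDLCoupled μ paretoF paretoG X Y) :
    StOrder paretoF paretoG ∧
    (∀ c : ℝ, 4 ≤ c →
      (μ {ω | X ω + Y ω ≤ c}).toReal =
        (c + Real.sqrt (c ^ 2 - 4 * c) - 4) / (2 * c)) ∧
    essInf (fun ω => X ω + Y ω) μ = 4 := by
  obtain ⟨⟨mX, hFd⟩, ⟨mY, hGd⟩, hle⟩ := hXY
  have hF : ∀ x, (μ {ω | X ω ≤ x}).toReal = paretoF x := hFd
  have hG : ∀ x, (μ {ω | Y ω ≤ x}).toReal = paretoG x := hGd
  have mXle : ∀ a : ℝ, MeasurableSet {ω | X ω ≤ a} := fun a => mX measurableSet_Iic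
  have mXlt : ∀ a : ℝ, MeasurableSet {ω | X ω < a} := fun a => mX measurableSet_Iio
  have mYle : ∀ a : ℝ, MeasurableSet {ω | Y ω ≤ a} := fun a => mY measurableSet_Iic
  have mRect : ∀ a b : ℝ, MeasurableSet {ω | X ω ≤ a ∧ Y ω ≤ b} :=
    fun a b => (mXle a).inter (mYle b)
  have hFlt : ∀ t, (μ {ω | X ω < t}).toReal = paretoF t :=
    meas_lt_pareto μ X le_rfl (fun _ => rfl) hF
  have hGlt : ∀ t, (μ {ω | Y ω < t}).toReal = paretoG t :=
    meas_lt_pareto μ Y one_le_two (fun _ => rfl) hG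
  have hF2 : paretoF 2 = 1/2 := by rw [paretoF_of_le one_le_two]; norm_num
  -- null sets
  have n1 : μ {ω | X ω ≤ 1} = 0 := by
    apply pr_zero μ; rw [hF 1, paretoF_of_le le_rfl]; norm_num
  have n3 : μ {ω | X ω = 2} = 0 := by
    have hsub : {ω | X ω < 2} ⊆ {ω | X ω ≤ 2} := fun ω (h : X ω < 2) => h.le
    have hnull := pr_null_diff μ hsub (mXlt 2) (by rw [hFlt 2, hF 2])
    apply measure_mono_null _ hnull
    intro ω hω
    have h2 : X ω = 2 := hω
    exact ⟨h2.le, by simp only [mem_setOf_eq, h2]; exact lt_irrefl 2⟩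
  have nYX : μ {ω | Y ω < X ω} = 0 := by
    have h := ae_iff.1 hle
    simpa [not_le] using h
  -- On {X > 2}, Y ≤ X a.s.
  have n4 : μ {ω | 2 < X ω ∧ X ω < Y ω} = 0 := by
    have key : ∀ q : ℚ, 2 < (q:ℝ) →
        μ {ω | 2 < X ω ∧ X ω ≤ (q:ℝ) ∧ (q:ℝ) < Y ω} = 0 := by
      intro q hq
      have hsub1 : {ω | X ω ≤ 2} ⊆ {ω | X ω ≤ (q:ℝ)} := fun ω h => le_trans h hq.le
      have hsub2 : {ω | X ω ≤ 2 ∧ Y ω ≤ (q:ℝ)} ⊆ {ω | X ω ≤ (q:ℝ) ∧ Y ω ≤ (q:ℝ)} :=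
        fun ω h => ⟨le_trans h.1 hq.le, h.2⟩
      have hq0 : (q:ℝ) ≠ 0 := by positivity
      have p1 : (μ ({ω | X ω ≤ (q:ℝ)} \ {ω | X ω ≤ 2})).toReal = 1/2 - 1/q := by
        rw [pr_diff μ hsub1 (mXle 2), hF, hF, paretoF_of_le (by linarith), hF2]
        ring
      have p2 : (μ ({ω | X ω ≤ (q:ℝ) ∧ Y ω ≤ (q:ℝ)} \ {ω | X ω ≤ 2 ∧ Y ω ≤ (q:ℝ)})).toReal
          = 1/2 - 1/q := by
        rw [pr_diff μ hsub2 (mRect 2 q), hDL, hDL, DLdf_of_le le_rfl,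
          DLdf_two le_rfl hq.le, paretoG_of_le hq.le]
        ring
      have hsub3 : ({ω | X ω ≤ (q:ℝ) ∧ Y ω ≤ (q:ℝ)} \ {ω | X ω ≤ 2 ∧ Y ω ≤ (q:ℝ)})
          ⊆ ({ω | X ω ≤ (q:ℝ)} \ {ω | X ω ≤ 2}) := by
        rintro ω ⟨⟨h1, h2⟩, h3⟩
        exact ⟨h1, fun h => h3 ⟨h, h2⟩⟩
      have hnull := pr_null_diff μ hsub3 ((mRect q q).diff (mRect 2 q)) (by rw [p2, p1])
      apply measure_mono_null _ hnull
      rintro ω ⟨h1, h2, h3⟩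
      refine ⟨⟨h2, not_le.2 h1⟩, ?_⟩
      rintro ⟨⟨_, hy⟩, _⟩
      exact absurd hy (not_le.2 h3)
    have hcov : {ω | 2 < X ω ∧ X ω < Y ω} ⊆
        ⋃ q : ℚ, (if 2 < (q:ℝ) then {ω | 2 < X ω ∧ X ω ≤ (q:ℝ) ∧ (q:ℝ) < Y ω} else ∅) := by
      rintro ω ⟨h1, h2⟩
      obtain ⟨q, hq1, hq2⟩ := exists_rat_btwn h2
      refine mem_iUnion.2 ⟨q, ?_⟩
      rw [if_pos (lt_trans h1 hq1)]
      exact ⟨h1, hq1.le, hq2⟩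
    refine measure_mono_null hcov (measure_iUnion_null fun q => ?_)
    split_ifs with h
    · exact key q h
    · exact measure_empty
  -- Claim A : on {1 < X < 2}, Y ≥ X/(X-1) a.s.
  have nEA : μ {ω | 1 < X ω ∧ X ω < 2 ∧ Y ω * (X ω - 1) < X ω} = 0 := by
    have key : ∀ p : ℚ × ℚ,
        μ (if (1 < ((p.1:ℝ)) ∧ (p.1:ℝ) < 2 ∧ 1 < (p.2:ℝ) ∧ (p.1:ℝ) * (p.2:ℝ) ≤ (p.1:ℝ) + (p.2:ℝ))
          then {ω | X ω ≤ (p.1:ℝ) ∧ Y ω ≤ (p.2:ℝ)} else ∅) = 0 := by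
      intro p
      split_ifs with h
      · obtain ⟨h1, h2, h3, h4⟩ := h
        apply pr_zero μ
        rw [hDL, DLdf_zero h1 h2 h3 h4]
      · exact measure_empty
    have hcov : {ω | 1 < X ω ∧ X ω < 2 ∧ Y ω * (X ω - 1) < X ω} ⊆
        ⋃ p : ℚ × ℚ,
          (if (1 < ((p.1:ℝ)) ∧ (p.1:ℝ) < 2 ∧ 1 < (p.2:ℝ) ∧ (p.1:ℝ) * (p.2:ℝ) ≤ (p.1:ℝ) + (p.2:ℝ))
            then {ω | X ω ≤ (p.1:ℝ) ∧ Y ω ≤ (p.2:ℝ)} else ∅) := by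
      rintro ω ⟨h1, h2, h3⟩
      have hX1 : (0:ℝ) < X ω - 1 := by linarith
      have hgt2 : 2 < X ω / (X ω - 1) := by
        rw [lt_div_iff₀ hX1]; linarith
      have hYlt : max (Y ω) 1 < X ω / (X ω - 1) := by
        apply max_lt
        · rw [lt_div_iff₀ hX1]; exact h3
        · linarith
      obtain ⟨q2, hq2a, hq2b⟩ := exists_rat_btwn hYlt
      have hq2_1 : 1 < (q2:ℝ) := lt_of_le_of_lt (le_max_right _ _) hq2a
      have hq2Y : Y ω ≤ (q2:ℝ) := le_of_lt (lt_of_le_of_lt (le_max_left _ _) hq2a)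
      have hq2X : X ω < (q2:ℝ)/((q2:ℝ)-1) := by
        rw [lt_div_iff₀ (by linarith : (0:ℝ) < (q2:ℝ)-1)]
        have hh := (lt_div_iff₀ hX1).1 hq2b
        nlinarith
      obtain ⟨q1, hq1a, hq1b⟩ := exists_rat_btwn (lt_min h2 hq2X)
      have hq1_2 : (q1:ℝ) < 2 := lt_of_lt_of_le hq1b (min_le_left _ _)
      have hq1_t : (q1:ℝ) < (q2:ℝ)/((q2:ℝ)-1) := lt_of_lt_of_le hq1b (min_le_right _ _)
      have hcond : 1 < ((q1:ℝ)) ∧ (q1:ℝ) < 2 ∧ 1 < (q2:ℝ) ∧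
          (q1:ℝ) * (q2:ℝ) ≤ (q1:ℝ) + (q2:ℝ) := by
        refine ⟨lt_trans h1 hq1a, hq1_2, hq2_1, ?_⟩
        have hh := (lt_div_iff₀ (by linarith : (0:ℝ) < (q2:ℝ)-1)).1 hq1_t
        nlinarith
      refine mem_iUnion.2 ⟨(q1, q2), ?_⟩
      rw [if_pos hcond]
      exact ⟨hq1a.le, hq2Y⟩
    exact measure_mono_null hcov (measure_iUnion_null key)
  -- Claim B : on {1 < X < 2}, Y ≤ X/(X-1) a.s.
  have nEB : μ {ω | 1 < X ω ∧ X ω < 2 ∧ X ω < Y ω * (X ω - 1)} = 0 := by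
    have key : ∀ a b : ℚ, 1 < ((a:ℝ)) → (a:ℝ) < 2 → ((a:ℝ) + (b:ℝ) ≤ (a:ℝ) * (b:ℝ)) →
        μ {ω | (b:ℝ)/((b:ℝ)-1) ≤ X ω ∧ X ω ≤ (a:ℝ) ∧ (b:ℝ) < Y ω} = 0 := by
      intro a b h1 h2 h3
      have hb2 : 2 < (b:ℝ) := by nlinarith
      set t : ℝ := (b:ℝ)/((b:ℝ)-1) with htdef
      have hb1 : (0:ℝ) < (b:ℝ) - 1 := by linarith
      have ht1 : 1 < t := by rw [htdef, lt_div_iff₀ hb1]; linarith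
      have ht2 : t < 2 := by rw [htdef, div_lt_iff₀ hb1]; linarith
      have hta : t ≤ (a:ℝ) := by rw [htdef, div_le_iff₀ hb1]; nlinarith
      have pbig : (μ ({ω | X ω ≤ (a:ℝ)} \ {ω | X ω ≤ (a:ℝ) ∧ Y ω ≤ (b:ℝ)})).toReal
          = 1/(b:ℝ) := by
        have hsubr : {ω | X ω ≤ (a:ℝ) ∧ Y ω ≤ (b:ℝ)} ⊆ {ω | X ω ≤ (a:ℝ)} :=
          fun ω h => h.1
        rw [pr_diff μ hsubr (mRect a b), hF, hDL,
          DLdf_cross h1 h2 hb2.le h3, paretoF_of_le h1.le]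
        ring
      have hdiffnull : μ ({ω | X ω < t} \ {ω | (b:ℝ) < Y ω}) = 0 := by
        apply measure_mono_null _ (measure_union_null n1 nEA)
        rintro ω ⟨hxt0, hy0⟩
        have hxt : X ω < t := hxt0
        have hyb : Y ω ≤ (b:ℝ) := not_lt.1 hy0
        rcases le_or_gt (X ω) 1 with hx1 | hx1
        · exact Or.inl hx1
        · refine Or.inr ⟨hx1, lt_trans hxt ht2, ?_⟩
          have hXt : X ω < (b:ℝ)/((b:ℝ)-1) := hxt
          rw [lt_div_iff₀ hb1] at hXt
          -- X (b-1) < b  →  b (X-1) < X ; with Y ≤ b get Y (X-1) < X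
          have hX1 : (0:ℝ) < X ω - 1 := by linarith
          nlinarith
      have pinter : (μ ({ω | X ω < t} ∩ {ω | (b:ℝ) < Y ω})).toReal = 1/(b:ℝ) := by
        rw [pr_inter_of_diff_null μ hdiffnull, hFlt t, paretoF_of_le ht1.le, htdef,
          one_div_div]
        field_simp
        ring
      have hsubBI : ({ω | X ω < t} ∩ {ω | (b:ℝ) < Y ω}) ⊆
          ({ω | X ω ≤ (a:ℝ)} \ {ω | X ω ≤ (a:ℝ) ∧ Y ω ≤ (b:ℝ)}) := by
        rintro ω ⟨hxt0, hyy0⟩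
        have hxt : X ω < t := hxt0
        have hyy : (b:ℝ) < Y ω := hyy0
        exact ⟨le_trans (le_of_lt hxt) hta, fun hmem => absurd hmem.2 (not_le.2 hyy)⟩
      have hfin := pr_null_diff μ hsubBI
        ((mXlt t).inter (mY measurableSet_Ioi)) (pinter.trans pbig.symm)
      apply measure_mono_null _ hfin
      rintro ω ⟨h1', h2', h3'⟩
      refine ⟨⟨h2', fun hmem => absurd hmem.2 (not_le.2 h3')⟩, ?_⟩
      rintro ⟨hx, _⟩
      exact absurd h1' (not_le.2 hx)
    have hcov : {ω | 1 < X ω ∧ X ω < 2 ∧ X ω < Y ω * (X ω - 1)} ⊆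
        ⋃ p : ℚ × ℚ,
          (if (1 < ((p.1:ℝ)) ∧ (p.1:ℝ) < 2 ∧ (p.1:ℝ) + (p.2:ℝ) ≤ (p.1:ℝ) * (p.2:ℝ))
            then {ω | (p.2:ℝ)/((p.2:ℝ)-1) ≤ X ω ∧ X ω ≤ (p.1:ℝ) ∧ (p.2:ℝ) < Y ω} else ∅) := by
      rintro ω ⟨h1, h2, h3⟩
      have hX1 : (0:ℝ) < X ω - 1 := by linarith
      have hYgt : X ω / (X ω - 1) < Y ω := (div_lt_iff₀ hX1).2 h3
      obtain ⟨q2, hq2a, hq2b⟩ := exists_rat_btwn hYgt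
      have hgt2 : 2 < X ω / (X ω - 1) := by rw [lt_div_iff₀ hX1]; linarith
      have hq2gt2 : 2 < (q2:ℝ) := lt_trans hgt2 hq2a
      have hq2t : (q2:ℝ)/((q2:ℝ)-1) < X ω := by
        rw [div_lt_iff₀ (by linarith : (0:ℝ) < (q2:ℝ)-1)]
        have hh := (div_lt_iff₀ hX1).1 hq2a
        nlinarith
      obtain ⟨q1, hq1a, hq1b⟩ := exists_rat_btwn h2
      have hcond : 1 < ((q1:ℝ)) ∧ (q1:ℝ) < 2 ∧
          (q1:ℝ) + (q2:ℝ) ≤ (q1:ℝ) * (q2:ℝ) := by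
        refine ⟨lt_trans h1 hq1a, hq1b, ?_⟩
        have hh := (div_lt_iff₀ (by linarith : (0:ℝ) < (q2:ℝ)-1)).1
          (lt_trans hq2t hq1a)
        nlinarith
      refine mem_iUnion.2 ⟨(q1, q2), ?_⟩
      rw [if_pos hcond]
      exact ⟨hq2t.le, hq1a.le, hq2b⟩
    refine measure_mono_null hcov (measure_iUnion_null fun p => ?_)
    split_ifs with h
    · exact key p.1 p.2 h.1 h.2.1 h.2.2
    · exact measure_empty
  -- the bad set
  have hBadNull : μ ({ω | X ω ≤ 1} ∪ ({ω | X ω = 2} ∪ ({ω | Y ω < X ω} ∪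
      ({ω | 2 < X ω ∧ X ω < Y ω} ∪
        ({ω | 1 < X ω ∧ X ω < 2 ∧ Y ω * (X ω - 1) < X ω} ∪
          {ω | 1 < X ω ∧ X ω < 2 ∧ X ω < Y ω * (X ω - 1)}))))) = 0 :=
    measure_union_null n1 (measure_union_null n3 (measure_union_null nYX
      (measure_union_null n4 (measure_union_null nEA nEB))))
  have hGoodStruct : ∀ ω, ω ∉ ({ω | X ω ≤ 1} ∪ ({ω | X ω = 2} ∪ ({ω | Y ω < X ω} ∪
      ({ω | 2 < X ω ∧ X ω < Y ω} ∪
        ({ω | 1 < X ω ∧ X ω < 2 ∧ Y ω * (X ω - 1) < X ω} ∪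
          {ω | 1 < X ω ∧ X ω < 2 ∧ X ω < Y ω * (X ω - 1)}))))) →
      (2 < X ω ∧ Y ω = X ω) ∨ (1 < X ω ∧ X ω < 2 ∧ Y ω * (X ω - 1) = X ω) := by
    intro ω hω
    simp only [mem_union, mem_setOf_eq, not_or] at hω
    obtain ⟨g1, g2, g3, g4, g5, g6⟩ := hω
    have hx1 : 1 < X ω := not_le.1 g1
    rcases lt_trichotomy (X ω) 2 with h | h | h
    · right
      refine ⟨hx1, h, ?_⟩
      have h5 : ¬ (Y ω * (X ω - 1) < X ω) := fun hc => g5 ⟨hx1, h, hc⟩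
      have h6 : ¬ (X ω < Y ω * (X ω - 1)) := fun hc => g6 ⟨hx1, h, hc⟩
      linarith [not_lt.1 h5, not_lt.1 h6]
    · exact absurd h g2
    · left
      refine ⟨h, le_antisymm ?_ ?_⟩
      · exact not_lt.1 (fun hc => g4 ⟨h, hc⟩)
      · exact not_lt.1 g3
  -- the sum distribution formula
  have hsum : ∀ c : ℝ, 4 ≤ c →
      (μ {ω | X ω + Y ω ≤ c}).toReal =
        (c + Real.sqrt (c ^ 2 - 4 * c) - 4) / (2 * c) := by
    intro c hc
    set s : ℝ := Real.sqrt (c ^ 2 - 4 * c) with hsdef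
    have hs0 : 0 ≤ s := Real.sqrt_nonneg _
    have hs2 : s ^ 2 = c ^ 2 - 4 * c := Real.sq_sqrt (by nlinarith)
    set r : ℝ := (c - s)/2 with hrdef
    have hslt : s < c - 2 := by
      rw [hsdef]
      rw [Real.sqrt_lt' (by linarith : (0:ℝ) < c - 2)]
      nlinarith
    have hsge : c - 4 ≤ s := by
      rw [hsdef]
      exact Real.le_sqrt_of_sq_le (by nlinarith)
    have hr1 : 1 < r := by rw [hrdef]; linarith
    have hr2 : r ≤ 2 := by rw [hrdef]; linarith
    have hrq : r ^ 2 - c * r + c = 0 := by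
      rw [hrdef]; linear_combination hs2 / 4
    -- identification of the event
    have hiff : ∀ ω, ω ∉ ({ω | X ω ≤ 1} ∪ ({ω | X ω = 2} ∪ ({ω | Y ω < X ω} ∪
        ({ω | 2 < X ω ∧ X ω < Y ω} ∪
          ({ω | 1 < X ω ∧ X ω < 2 ∧ Y ω * (X ω - 1) < X ω} ∪
            {ω | 1 < X ω ∧ X ω < 2 ∧ X ω < Y ω * (X ω - 1)}))))) →
        (X ω + Y ω ≤ c ↔ ω ∈ ({ω | 2 < X ω ∧ X ω ≤ c/2} ∪ {ω | r ≤ X ω ∧ X ω < 2})) := by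
      intro ω hω
      rcases hGoodStruct ω hω with ⟨hx, hyx⟩ | ⟨h1, h2, hyx⟩
      · constructor
        · intro h
          rw [hyx] at h
          exact Or.inl ⟨hx, by linarith⟩
        · rintro (⟨_, h⟩ | ⟨_, h2⟩)
          · rw [hyx]; linarith
          · linarith
      · constructor
        · intro hsum'
          refine Or.inr ⟨?_, h2⟩
          by_contra hcon
          push_neg at hcon
          have hp1 : 0 < (r - X ω)*(c - r - X ω) := mul_pos (by linarith) (by linarith)
          have hp2 : 0 ≤ (X ω - 1)*(c - X ω - Y ω) := mul_nonneg (by linarith) (by linarith)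
          nlinarith [hp1, hp2, hyx, hrq]
        · rintro (⟨hgt, _⟩ | ⟨hrX, _⟩)
          · linarith
          · have hp1 : 0 ≤ (X ω - r)*(c - r - X ω) := mul_nonneg (by linarith) (by linarith)
            by_contra hcon
            push_neg at hcon
            have hp2 : 0 < (X ω - 1)*(X ω + Y ω - c) := mul_pos (by linarith) (by linarith)
            nlinarith [hp1, hp2, hyx, hrq]
    have hae1 : μ ({ω | X ω + Y ω ≤ c} \
        ({ω | 2 < X ω ∧ X ω ≤ c/2} ∪ {ω | r ≤ X ω ∧ X ω < 2})) = 0 := by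
      apply measure_mono_null _ hBadNull
      rintro ω ⟨h1, h2⟩
      by_contra hb
      exact h2 ((hiff ω hb).1 h1)
    have hae2 : μ (({ω | 2 < X ω ∧ X ω ≤ c/2} ∪ {ω | r ≤ X ω ∧ X ω < 2}) \
        {ω | X ω + Y ω ≤ c}) = 0 := by
      apply measure_mono_null _ hBadNull
      rintro ω ⟨h1, h2⟩
      by_contra hb
      exact h2 ((hiff ω hb).2 h1)
    have hmeq : μ {ω | X ω + Y ω ≤ c} =
        μ ({ω | 2 < X ω ∧ X ω ≤ c/2} ∪ {ω | r ≤ X ω ∧ X ω < 2}) :=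
      measure_congr (MeasureTheory.ae_eq_set.2 ⟨hae1, hae2⟩)
    -- compute the probabilities
    have hc2 : (1:ℝ) ≤ c/2 := by linarith
    have hS1eq : {ω | 2 < X ω ∧ X ω ≤ c/2} = {ω | X ω ≤ c/2} \ {ω | X ω ≤ 2} := by
      ext ω
      constructor
      · rintro ⟨h1, h2⟩; exact ⟨h2, not_le.2 h1⟩
      · rintro ⟨h1, h2⟩; exact ⟨not_le.1 h2, h1⟩
    have hS2eq : {ω | r ≤ X ω ∧ X ω < 2} = {ω | X ω < 2} \ {ω | X ω < r} := by
      ext ω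
      constructor
      · rintro ⟨h1, h2⟩; exact ⟨h2, not_lt.2 h1⟩
      · rintro ⟨h1, h2⟩; exact ⟨not_lt.1 h2, h1⟩
    have pS1 : (μ {ω | 2 < X ω ∧ X ω ≤ c/2}).toReal = 1/2 - 2/c := by
      have hsub12 : {ω | X ω ≤ 2} ⊆ {ω | X ω ≤ c/2} :=
        fun ω (h : X ω ≤ 2) => le_trans h (by linarith)
      rw [hS1eq, pr_diff μ hsub12 (mXle 2), hF, hF, hF2, paretoF_of_le hc2, one_div_div]
      ring
    have pS2 : (μ {ω | r ≤ X ω ∧ X ω < 2}).toReal = 1/r - 1/2 := by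
      have hsub22 : {ω | X ω < r} ⊆ {ω | X ω < 2} :=
        fun ω (h : X ω < r) => lt_of_lt_of_le h hr2
      rw [hS2eq, pr_diff μ hsub22 (mXlt r), hFlt, hFlt, hF2, paretoF_of_le hr1.le]
      ring
    have hdisj : Disjoint {ω | 2 < X ω ∧ X ω ≤ c/2} {ω | r ≤ X ω ∧ X ω < 2} := by
      rw [Set.disjoint_left]
      rintro ω ⟨h1, _⟩ ⟨_, h4⟩
      linarith
    have hm2 : MeasurableSet {ω | r ≤ X ω ∧ X ω < 2} :=
      (mX measurableSet_Ici).inter (mXlt 2)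
    rw [hmeq, pr_union μ hdisj hm2, pS1, pS2]
    have hr0 : r ≠ 0 := by linarith
    have hc0 : c ≠ 0 := by linarith
    have hseq : s = c - 2*r := by rw [hrdef]; ring
    rw [hseq]
    field_simp
    linear_combination 2 * hrq
  -- almost surely X + Y ≥ 4
  have hsumge : ∀ᵐ ω ∂μ, 4 ≤ X ω + Y ω := by
    rw [ae_iff]
    apply measure_mono_null _ hBadNull
    intro ω hω
    simp only [mem_setOf_eq, not_le] at hω
    by_contra hb
    rcases hGoodStruct ω hb with ⟨h1, h2⟩ | ⟨h1, h2, h3⟩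
    · rw [h2] at hω; linarith
    · nlinarith [mul_pos (show (0:ℝ) < X ω - 1 by linarith)
        (show 0 < 4 - (X ω + Y ω) by linarith), h3]
  refine ⟨?_, hsum, ?_⟩
  · -- stochastic order
    intro x
    rcases le_or_gt 2 x with h | h
    · rw [paretoF_of_le (by linarith), paretoG_of_le h]
      have h0 : (0:ℝ) < x := by linarith
      have : 1/x ≤ 2/x := by gcongr <;> norm_num
      linarith
    · rw [paretoG_of_le_two h.le]; exact paretoF_nonneg x
  · -- essential infimum
    rw [essInf_eq_sSup]
    have hset : {a : ℝ | μ {x | (fun ω => X ω + Y ω) x < a} = 0} = Iic 4 := by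
      ext a
      simp only [mem_setOf_eq, mem_Iic]
      constructor
      · intro h
        by_contra hcon
        push_neg at hcon
        set c : ℝ := (4 + a)/2 with hcdef
        have hc4 : 4 ≤ c := by rw [hcdef]; linarith
        have hc4' : 4 < c := by rw [hcdef]; linarith
        have hca : c < a := by rw [hcdef]; linarith
        have hval := hsum c hc4
        have hzero : μ {ω | X ω + Y ω ≤ c} = 0 :=
          measure_mono_null (fun ω (hh : X ω + Y ω ≤ c) => lt_of_le_of_lt hh hca) h
        rw [hzero] at hval
        simp only [ENNReal.toReal_zero] at hval
        have hpos : 0 < (c + Real.sqrt (c^2 - 4*c) - 4)/(2*c) := by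
          apply div_pos ?_ (by linarith)
          have := Real.sqrt_nonneg (c^2 - 4*c)
          linarith
        rw [show c^2 - 4*c = c ^ 2 - 4 * c from rfl] at hpos
        linarith [hval, hpos]
      · intro ha
        apply measure_mono_null _ (ae_iff.1 hsumge)
        intro ω hω
        have : X ω + Y ω < a := hω
        simp only [mem_setOf_eq, not_le]
        linarith
    rw [hset]
    exact csSup_Iic
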